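/- Gradient perturbation bound for flexible GBT: let D be a flexible-GBT dataset and let D' be obtained from D by adding one comparison (a, b, r, f), where the support of f is contained in [−R, R] and |r| ≤ R. Then for every β ∈ ℝ^D, ‖∇L(β | D') − ∇L(β | D)‖₂ ≤ 4 R ‖x‖_{2,∞}, where ‖x‖_{2,∞} = max_{a ∈ [A]} ‖x_a‖₂. -/

import Mathlib

open MeasureTheory RealInnerProductSpace

noncomputable section

/-- The cumulant generating function `Φ_μ(θ) = log ∫ exp(θ r) dμ(r)` of a measure `μ` on `ℝ`. -/
def cgfm (μ : Measure ℝ) (θ : ℝ) : ℝ := Real.log (∫ r, Real.exp (θ * r) ∂μ)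

/-- `μ` has finite exponential moments: `∫ exp(θ r) dμ(r) < ∞` for every `θ`. -/
def HasExpMoments (μ : Measure ℝ) : Prop :=
  ∀ θ : ℝ, Integrable (fun r => Real.exp (θ * r)) μ

/-- The quadratic form `v ↦ vᵀ M v`. -/
def quadForm {n : ℕ} (M : Matrix (Fin n) (Fin n) ℝ) (v : EuclideanSpace ℝ (Fin n)) : ℝ :=
  ∑ i, ∑ j, v i * M i j * v j

/-- The flexible-GBT negative log-posterior `L(β | D)` for a dataset `data` consisting of
comparisons `(a, b, r, f)` (entities `a, b`, value `r`, root law `f`), with embedding columns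
`x a ∈ ℝ^D` and prior covariance matrix `S = Σ_β`. -/
def fgbtLoss {Dd A : ℕ} (x : Fin A → EuclideanSpace ℝ (Fin Dd))
    (S : Matrix (Fin Dd) (Fin Dd) ℝ)
    (data : Multiset (Fin A × Fin A × ℝ × Measure ℝ))
    (β : EuclideanSpace ℝ (Fin Dd)) : ℝ :=
  (1 / 2) * quadForm S⁻¹ β
    + (data.map (fun q =>
        cgfm q.2.2.2 ⟪x q.1 - x q.2.1, β⟫ - q.2.2.1 * ⟪x q.1 - x q.2.1, β⟫)).sum

open Metric in
lemma cgfm_hasDerivAt_bound (f : Measure ℝ) [IsProbabilityMeasure f] (hf : HasExpMoments f)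
    {R : ℝ} (hR : 0 ≤ R) (hsupp : f (Set.Icc (-R) R)ᶜ = 0) (θ₀ : ℝ) :
    ∃ c : ℝ, |c| ≤ R ∧ HasDerivAt (cgfm f) c θ₀ := by
  have hae : ∀ᵐ t ∂f, t ∈ Set.Icc (-R) R := by
    have hs : {t : ℝ | ¬ t ∈ Set.Icc (-R) R} = (Set.Icc (-R) R)ᶜ := rfl
    rw [ae_iff, hs]
    exact hsupp
  have hMpos : ∀ θ : ℝ, 0 < ∫ t, Real.exp (θ * t) ∂f := by
    intro θ
    have := ProbabilityTheory.mgf_pos (X := id) (μ := f) (t := θ) (by simpa using hf θ)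
    simpa [ProbabilityTheory.mgf] using this
  -- derivative of M under the integral sign
  have key : Integrable (fun t => Real.exp (θ₀ * t) * t) f ∧
      HasDerivAt (fun θ => ∫ t, Real.exp (θ * t) ∂f)
        (∫ t, Real.exp (θ₀ * t) * t ∂f) θ₀ := by
    apply hasDerivAt_integral_of_dominated_loc_of_deriv_le
      (F' := fun θ t => Real.exp (θ * t) * t)
      (bound := fun _ => Real.exp ((|θ₀| + 1) * R) * R) (ball_mem_nhds θ₀ one_pos)
    · exact Filter.Eventually.of_forall fun θ =>
        (Continuous.aestronglyMeasurable (by continuity))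
    · exact hf θ₀
    · exact Continuous.aestronglyMeasurable (by continuity)
    · filter_upwards [hae] with t ht θ hθ
      obtain ⟨h1, h2⟩ := ht
      have htR : |t| ≤ R := abs_le.2 ⟨h1, h2⟩
      have hθR : |θ| ≤ |θ₀| + 1 := by
        have := mem_ball_iff_norm.1 hθ
        calc |θ| ≤ |θ - θ₀| + |θ₀| := by simpa using abs_add_le (θ - θ₀) θ₀
        _ ≤ |θ₀| + 1 := by rw [Real.norm_eq_abs] at this; linarith
      have hexp : Real.exp (θ * t) ≤ Real.exp ((|θ₀| + 1) * R) := by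
        apply Real.exp_le_exp.2
        calc θ * t ≤ |θ * t| := le_abs_self _
        _ = |θ| * |t| := abs_mul _ _
        _ ≤ (|θ₀| + 1) * R := by
            apply mul_le_mul hθR htR (abs_nonneg t) (by positivity)
      calc ‖Real.exp (θ * t) * t‖ = Real.exp (θ * t) * |t| := by
            rw [Real.norm_eq_abs, abs_mul, abs_of_pos (Real.exp_pos _)]
      _ ≤ Real.exp ((|θ₀| + 1) * R) * R :=
            mul_le_mul hexp htR (abs_nonneg t) (Real.exp_pos _).le
    · exact integrable_const _
    · filter_upwards with t θ _
      simpa [mul_comm] using ((hasDerivAt_mul_const t).exp (x := θ))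
  obtain ⟨hint, hM'⟩ := key
  refine ⟨(∫ t, Real.exp (θ₀ * t) * t ∂f) / (∫ t, Real.exp (θ₀ * t) ∂f), ?_, ?_⟩
  · rw [abs_div, abs_of_pos (hMpos θ₀), div_le_iff₀ (hMpos θ₀)]
    calc |∫ t, Real.exp (θ₀ * t) * t ∂f| ≤ ∫ t, ‖Real.exp (θ₀ * t) * t‖ ∂f :=
          by rw [← Real.norm_eq_abs]; exact norm_integral_le_integral_norm _
    _ ≤ ∫ t, R * Real.exp (θ₀ * t) ∂f := by
        apply integral_mono_ae hint.norm ((hf θ₀).const_mul R)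
        filter_upwards [hae] with t ht
        obtain ⟨h1, h2⟩ := ht
        have htR : |t| ≤ R := abs_le.2 ⟨h1, h2⟩
        rw [Real.norm_eq_abs, abs_mul, abs_of_pos (Real.exp_pos _)]
        calc Real.exp (θ₀ * t) * |t| ≤ Real.exp (θ₀ * t) * R :=
              mul_le_mul_of_nonneg_left htR (Real.exp_pos _).le
        _ = R * Real.exp (θ₀ * t) := mul_comm _ _
    _ = R * ∫ t, Real.exp (θ₀ * t) ∂f := integral_const_mul _ _
  · exact hM'.log (hMpos θ₀).ne'



/-- gradient perturbation bound for flexible GBT. If `D'` is obtained from `D`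
by adding one comparison `(a, b, r, f)` with the support of `f` contained in `[−R, R]` and
`|r| ≤ R`, then for every `β`, `‖∇L(β | D') − ∇L(β | D)‖₂ ≤ 4 R ‖x‖_{2,∞}`, where
`‖x‖_{2,∞} = max_a ‖x_a‖₂`. -/
theorem fgbt_gradient_perturbation_bound
    {Dd A : ℕ} (x : Fin A → EuclideanSpace ℝ (Fin Dd))
    (S : Matrix (Fin Dd) (Fin Dd) ℝ) (hS : S.PosDef)
    (data : Multiset (Fin A × Fin A × ℝ × Measure ℝ))
    (hvalid : ∀ q ∈ data, IsProbabilityMeasure q.2.2.2 ∧ HasExpMoments q.2.2.2)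
    (a b : Fin A) (r : ℝ) (f : Measure ℝ) [IsProbabilityMeasure f] (hf : HasExpMoments f)
    (R : ℝ) (hsupp : f (Set.Icc (-R) R)ᶜ = 0) (hr : |r| ≤ R)
    (β : EuclideanSpace ℝ (Fin Dd)) :
    ‖gradient (fgbtLoss x S ((a, b, r, f) ::ₘ data)) β - gradient (fgbtLoss x S data) β‖
      ≤ 4 * R * ⨆ a' : Fin A, ‖x a'‖ := by
  have hR : 0 ≤ R := (abs_nonneg r).trans hr
  set v : EuclideanSpace ℝ (Fin Dd) := x a - x b with hv
  set g : EuclideanSpace ℝ (Fin Dd) → ℝ := fun β' => cgfm f ⟪v, β'⟫ - r * ⟪v, β'⟫ with hgdef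
  -- bound on the supremum
  have hbdd : BddAbove (Set.range fun a' : Fin A => ‖x a'‖) := Set.Finite.bddAbove (Set.finite_range _)
  have hsup : ∀ a' : Fin A, ‖x a'‖ ≤ ⨆ a'' : Fin A, ‖x a''‖ := fun a' => le_ciSup hbdd a'
  have hsup0 : 0 ≤ ⨆ a'' : Fin A, ‖x a''‖ := le_trans (norm_nonneg _) (hsup a)
  have hvnorm : ‖v‖ ≤ 2 * ⨆ a'' : Fin A, ‖x a''‖ := by
    calc ‖v‖ ≤ ‖x a‖ + ‖x b‖ := norm_sub_le _ _
    _ ≤ (⨆ a'' : Fin A, ‖x a''‖) + ⨆ a'' : Fin A, ‖x a''‖ := add_le_add (hsup a) (hsup b)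
    _ = 2 * ⨆ a'' : Fin A, ‖x a''‖ := (two_mul _).symm
  -- derivative of cgfm
  obtain ⟨c, hc, hder⟩ := cgfm_hasDerivAt_bound f hf hR hsupp ⟪v, β⟫
  -- g is differentiable with explicit fderiv
  have hg : HasFDerivAt g ((c - r) • innerSL ℝ v) β := by
    have h1 : HasFDerivAt (fun β' : EuclideanSpace ℝ (Fin Dd) => cgfm f ⟪v, β'⟫)
        (c • innerSL ℝ v) β :=
      hder.comp_hasFDerivAt β (innerSL ℝ v).hasFDerivAt
    have h2 : HasFDerivAt (fun β' : EuclideanSpace ℝ (Fin Dd) => r * ⟪v, β'⟫)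
        (r • innerSL ℝ v) β := (innerSL ℝ v).hasFDerivAt.const_mul r
    have h3 := h1.sub h2; rw [← sub_smul] at h3; exact h3
  -- the split of the loss
  have hsplit : fgbtLoss x S ((a, b, r, f) ::ₘ data)
      = fun β' => fgbtLoss x S data β' + g β' := by
    funext β'
    simp only [fgbtLoss, Multiset.map_cons, Multiset.sum_cons, hgdef]
    ring
  by_cases hd : DifferentiableAt ℝ (fgbtLoss x S data) β
  · have hL' : HasFDerivAt (fgbtLoss x S ((a, b, r, f) ::ₘ data))
        (fderiv ℝ (fgbtLoss x S data) β + (c - r) • innerSL ℝ v) β := by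
      rw [hsplit]; exact hd.hasFDerivAt.add hg
    have key : gradient (fgbtLoss x S ((a, b, r, f) ::ₘ data)) β
        = gradient (fgbtLoss x S data) β + (c - r) • v := by
      have : HasGradientAt (fgbtLoss x S ((a, b, r, f) ::ₘ data))
          (gradient (fgbtLoss x S data) β + (c - r) • v) β := by
        rw [hasGradientAt_iff_hasFDerivAt]
        refine hL'.congr_fderiv ?_
        symm
        ext y
        simp only [ContinuousLinearMap.add_apply, ContinuousLinearMap.smul_apply,
          map_add, _root_.map_smul]
        rw [InnerProductSpace.toDual_apply_apply]
        simp only [gradient, LinearIsometryEquiv.apply_symm_apply]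
        simp [innerSL_apply_apply, smul_eq_mul]
      rw [this.gradient]
    rw [key]
    have : gradient (fgbtLoss x S data) β + (c - r) • v - gradient (fgbtLoss x S data) β
        = (c - r) • v := by abel
    rw [this, norm_smul]
    calc ‖c - r‖ * ‖v‖ ≤ (2 * R) * (2 * ⨆ a'' : Fin A, ‖x a''‖) := by
          apply mul_le_mul _ hvnorm (norm_nonneg _) (by positivity)
          rw [Real.norm_eq_abs]
          calc |c - r| ≤ |c| + |r| := abs_sub _ _
          _ ≤ R + R := add_le_add hc hr
          _ = 2 * R := (two_mul R).symm
    _ = 4 * R * ⨆ a'' : Fin A, ‖x a''‖ := by ring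
  · have hd' : ¬ DifferentiableAt ℝ (fgbtLoss x S ((a, b, r, f) ::ₘ data)) β := by
      intro hcon
      apply hd
      have : fgbtLoss x S data = fun β' => fgbtLoss x S ((a, b, r, f) ::ₘ data) β' - g β' := by
        funext β'; rw [hsplit]; ring
      rw [this]
      exact hcon.sub hg.differentiableAt
    rw [gradient_eq_zero_of_not_differentiableAt hd',
      gradient_eq_zero_of_not_differentiableAt hd]
    simp only [sub_zero, norm_zero]
    positivity


end
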